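/- Let a < 1 with a ≠ 0, γ_0 > 0, and p ∈ (0,1), and define S_a(n,l) and p_N(n) as in the context. Then for every t ∈ [0,1], ∑_{n=0}^∞ p_N(n) · t^n = exp{ −γ_0 · ((1 − p t)^a − (1 − p)^a) / (a p^a) }. -/

import Mathlib

open Real Finset

/-- The numbers `S_a(n,l)` (generalized Stirling numbers up to the factor `a^{-l}`),
defined by `S_a(0,0) = 1`, `S_a(n,0) = 0` for `n ≥ 1`, `S_a(n,n) = 1`, and
`S_a(n+1,l) = (n − a·l)·S_a(n,l) + S_a(n,l−1)` for `1 ≤ l ≤ n` (and `S_a(n,l) = 0`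
for `l > n`). -/
noncomputable def Sgen (a : ℝ) : ℕ → ℕ → ℝ
  | 0, 0 => 1
  | 0, _ + 1 => 0
  | _ + 1, 0 => 0
  | n + 1, l + 1 => ((n : ℝ) - a * (l + 1)) * Sgen a n (l + 1) + Sgen a n l

noncomputable def bcoef (a : ℝ) : ℕ → ℝ
  | 0 => 0
  | 1 => 1
  | (k+2) => ((k : ℝ) + 1 - a) * bcoef a (k+1)

noncomputable def Bc (a : ℝ) : ℕ → ℕ → ℝ
  | n, 0 => if n = 0 then 1 else 0
  | n, (l+1) => (∑ k ∈ Finset.range (n+1), (n.choose k : ℝ) * Bc a k l * bcoef a (n-k)) / (l+1)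

lemma Bc_succ_def (a : ℝ) (n l : ℕ) : Bc a n (l+1) =
    (∑ k ∈ Finset.range (n+1), (n.choose k : ℝ) * Bc a k l * bcoef a (n-k)) / (l+1) := rfl

lemma Bc_zero_def (a : ℝ) (n : ℕ) : Bc a n 0 = if n = 0 then 1 else 0 := rfl

lemma bcoef_succ (a : ℝ) (k : ℕ) :
    bcoef a (k+1) = ((k : ℝ) - a) * bcoef a k + (if k = 0 then 1 else 0) := by
  match k with
  | 0 => simp [bcoef]
  | (m+1) =>
    show ((m : ℝ) + 1 - a) * bcoef a (m+1) = _
    simp only [Nat.add_eq_zero, one_ne_zero, and_false, if_false]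
    push_cast
    ring

lemma bcoef_nonneg {a : ℝ} (ha : a < 1) (k : ℕ) : 0 ≤ bcoef a k := by
  induction k with
  | zero => simp [bcoef]
  | succ m ih =>
    rw [bcoef_succ]
    have h2 : (0:ℝ) ≤ ((m:ℝ) - a) * bcoef a m := by
      rcases Nat.eq_zero_or_pos m with h | h
      · subst h; simp [bcoef]
      · have : (1:ℝ) ≤ (m:ℝ) := by exact_mod_cast h
        exact mul_nonneg (by linarith) ih
    positivity

lemma Bc_zero_succ (a : ℝ) (l : ℕ) : Bc a 0 (l+1) = 0 := by
  rw [Bc_succ_def]; simp [bcoef]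

lemma Bc_nonneg {a : ℝ} (ha : a < 1) (n l : ℕ) : 0 ≤ Bc a n l := by
  induction l generalizing n with
  | zero => rw [Bc_zero_def]; positivity
  | succ m ih =>
    rw [Bc_succ_def]
    apply div_nonneg _ (by positivity)
    apply Finset.sum_nonneg
    intro k _
    exact mul_nonneg (mul_nonneg (by positivity) (ih k)) (bcoef_nonneg ha _)

lemma Bc_rec (a : ℝ) (l : ℕ) : ∀ n : ℕ,
    Bc a (n+1) (l+1) = ((n : ℝ) - a * (l + 1)) * Bc a n (l+1) + Bc a n l := by
  induction l with
  | zero =>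
    intro n
    have h1 : ∀ m : ℕ, Bc a m 1 = bcoef a m := by
      intro m
      rw [Bc_succ_def, Finset.sum_eq_single 0]
      · simp [Bc_zero_def]
      · intro k _ hk; simp [Bc_zero_def, hk]
      · intro h; simp at h
    rw [h1, h1, bcoef_succ, Bc_zero_def]
    push_cast
    ring_nf
  | succ m ih =>
    intro n
    have hdef : ∀ N : ℕ, ((m:ℝ)+2) * Bc a N (m+2)
        = ∑ k ∈ Finset.range (N+1), (N.choose k : ℝ) * Bc a k (m+1) * bcoef a (N-k) := by
      intro N
      rw [Bc_succ_def]
      push_cast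
      field_simp
      ring
    have hdef' : ∀ N : ℕ, ((m:ℝ)+1) * Bc a N (m+1)
        = ∑ k ∈ Finset.range (N+1), (N.choose k : ℝ) * Bc a k m * bcoef a (N-k) := by
      intro N
      rw [Bc_succ_def]
      push_cast
      field_simp
    have key : ((m:ℝ)+2) * Bc a (n+1) (m+2) =
        ((n : ℝ) - a * (m + 2)) * (((m:ℝ)+2) * Bc a n (m+2)) + ((m:ℝ)+2) * Bc a n (m+1) := by
      rw [hdef (n+1)]
      rw [Finset.sum_range_succ' _ (n+1)]
      have h0 : ((n+1).choose 0 : ℝ) * Bc a 0 (m+1) * bcoef a (n+1-0) = 0 := by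
        simp [Bc_zero_succ]
      rw [h0, add_zero]
      have hp : ∀ k ∈ Finset.range (n+1),
          (((n+1).choose (k+1) : ℝ)) * Bc a (k+1) (m+1) * bcoef a (n+1-(k+1))
          = ((n.choose k : ℝ)) * Bc a (k+1) (m+1) * bcoef a (n-k)
            + ((n.choose (k+1) : ℝ)) * Bc a (k+1) (m+1) * bcoef a (n-k) := by
        intro k hk
        rw [Nat.choose_succ_succ n k, show n + 1 - (k+1) = n - k from by omega]
        push_cast
        ring
      rw [Finset.sum_congr rfl hp, Finset.sum_add_distrib]
      have hA : ∑ k ∈ Finset.range (n+1), (n.choose k : ℝ) * Bc a (k+1) (m+1) * bcoef a (n-k)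
          = ∑ k ∈ Finset.range (n+1),
              (n.choose k : ℝ) * (((k:ℝ) - a*((m:ℝ)+1)) * Bc a k (m+1)) * bcoef a (n-k)
            + ((m:ℝ)+1) * Bc a n (m+1) := by
        rw [hdef' n, ← Finset.sum_add_distrib]
        apply Finset.sum_congr rfl
        intro k _
        rw [ih k]
        push_cast
        ring
      rw [hA]
      have hB : ∑ k ∈ Finset.range (n+1), (n.choose (k+1) : ℝ) * Bc a (k+1) (m+1) * bcoef a (n-k)
          = ∑ j ∈ Finset.range (n+1), (n.choose j : ℝ) * Bc a j (m+1) * bcoef a (n+1-j) := by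
        rw [Finset.sum_range_succ,
          Finset.sum_range_succ' (fun j => (n.choose j : ℝ) * Bc a j (m+1) * bcoef a (n+1-j)) n]
        simp only [Nat.choose_succ_self, Nat.cast_zero, zero_mul, add_zero,
          Nat.choose_zero_right, Nat.cast_one, one_mul, Bc_zero_succ, mul_zero, zero_add]
        apply Finset.sum_congr rfl
        intro k _
        rw [show n + 1 - (k+1) = n - k from by omega]
      rw [hB]
      have hB2 : ∑ j ∈ Finset.range (n+1), (n.choose j : ℝ) * Bc a j (m+1) * bcoef a (n+1-j)
          = ∑ j ∈ Finset.range (n+1),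
              (n.choose j : ℝ) * Bc a j (m+1) * ((((n:ℝ)-(j:ℝ)) - a) * bcoef a (n-j))
            + Bc a n (m+1) := by
        have hterm : ∀ j ∈ Finset.range (n+1),
            (n.choose j : ℝ) * Bc a j (m+1) * bcoef a (n+1-j)
            = (n.choose j : ℝ) * Bc a j (m+1) * ((((n:ℝ)-(j:ℝ)) - a) * bcoef a (n-j))
              + (if j = n then Bc a n (m+1) else 0) := by
          intro j hj
          have hj' : j ≤ n := by simpa [Nat.lt_succ_iff] using hj
          rw [show n + 1 - j = (n - j) + 1 from by omega, bcoef_succ]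
          have hc : ((n - j : ℕ) : ℝ) = (n:ℝ) - (j:ℝ) := by
            rw [Nat.cast_sub hj']
          rw [hc]
          have hb0 : bcoef a 0 = 0 := rfl
          by_cases h : j = n
          · subst h
            simp [Nat.sub_self, hb0]
          · have hnz : n - j ≠ 0 := by omega
            simp [hnz, h]
        rw [Finset.sum_congr rfl hterm, Finset.sum_add_distrib, Finset.sum_ite_eq']
        simp
      rw [hB2]
      have hsum : ∑ k ∈ Finset.range (n+1),
              (n.choose k : ℝ) * (((k:ℝ) - a*((m:ℝ)+1)) * Bc a k (m+1)) * bcoef a (n-k)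
          + ∑ j ∈ Finset.range (n+1),
              (n.choose j : ℝ) * Bc a j (m+1) * ((((n:ℝ)-(j:ℝ)) - a) * bcoef a (n-j))
          = ((n : ℝ) - a * (m + 2)) * (((m:ℝ)+2) * Bc a n (m+2)) := by
        rw [hdef n, Finset.mul_sum, ← Finset.sum_add_distrib]
        apply Finset.sum_congr rfl
        intro k _
        ring
      have := hsum
      linarith [hsum]
    have hm2 : ((m:ℝ)+2) ≠ 0 := by positivity
    have goal2 : ((m:ℝ)+2) * Bc a (n+1) (m+2)
        = ((m:ℝ)+2) * (((n : ℝ) - a * ((m:ℝ) + 2)) * Bc a n (m+2) + Bc a n (m+1)) := by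
      rw [key]; ring
    have := mul_left_cancel₀ hm2 goal2
    rw [this]
    push_cast
    ring

lemma Sgen_eq_Bc (a : ℝ) : ∀ n l : ℕ, Sgen a n l = Bc a n l := by
  intro n
  induction n with
  | zero =>
    intro l
    match l with
    | 0 => simp [Sgen, Bc_zero_def]
    | (l+1) => simp [Sgen, Bc_zero_succ]
  | succ m ih =>
    intro l
    match l with
    | 0 => simp [Sgen, Bc_zero_def]
    | (l+1) =>
      show ((m : ℝ) - a * (l + 1)) * Sgen a m (l + 1) + Sgen a m l = _
      rw [ih, ih, Bc_rec]

lemma Sgen_eq_zero_of_lt (a : ℝ) : ∀ n l : ℕ, n < l → Sgen a n l = 0 := by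
  intro n
  induction n with
  | zero =>
    intro l hl
    match l, hl with
    | (l+1), _ => simp [Sgen]
  | succ m ih =>
    intro l hl
    match l, hl with
    | (l+1), hl =>
      show ((m : ℝ) - a * (l + 1)) * Sgen a m (l + 1) + Sgen a m l = 0
      rw [ih (l+1) (by omega), ih l (by omega)]
      ring

lemma Sgen_nonneg {a : ℝ} (ha : a < 1) (n l : ℕ) : 0 ≤ Sgen a n l := by
  rw [Sgen_eq_Bc]; exact Bc_nonneg ha n l

open Complex in
lemma iteratedDeriv_one_sub_cpow (a : ℝ) (n : ℕ) :
    ∀ z ∈ Metric.ball (0:ℂ) 1,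
      iteratedDeriv n (fun w : ℂ => (1 - w) ^ (a : ℂ)) z
        = (∏ j ∈ Finset.range n, ((a:ℂ) - j)) * (-1) ^ n * (1 - z) ^ ((a:ℂ) - n) := by
  induction n with
  | zero =>
    intro z hz
    simp [iteratedDeriv_zero]
  | succ n ih =>
    intro z hz
    rw [iteratedDeriv_succ]
    have hopen : IsOpen (Metric.ball (0:ℂ) 1) := Metric.isOpen_ball
    have hev : (fun w => iteratedDeriv n (fun w : ℂ => (1 - w) ^ (a : ℂ)) w)
        =ᶠ[nhds z] (fun w => (∏ j ∈ Finset.range n, ((a:ℂ) - j)) * (-1) ^ n * (1 - w) ^ ((a:ℂ) - n)) := by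
      filter_upwards [hopen.mem_nhds hz] with w hw
      exact ih w hw
    rw [hev.deriv_eq]
    have hslit : (1 - z) ∈ Complex.slitPlane := by
      left
      have : ‖z‖ < 1 := by simpa using hz
      have := Complex.abs_re_le_norm z
      simp only [Complex.sub_re, Complex.one_re]
      cases' abs_lt.mp (lt_of_le_of_lt this ‹‖z‖ < 1›) with h1 h2
      linarith
    have hd : HasDerivAt (fun w : ℂ => (1 - w) ^ ((a:ℂ) - n))
        (((a:ℂ) - n) * (1 - z) ^ ((a:ℂ) - n - 1) * (-1)) z := by
      have hbase : HasDerivAt (fun w : ℂ => 1 - w) (-1 : ℂ) z := by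
        simpa using (hasDerivAt_id z).const_sub (1:ℂ)
      exact hbase.cpow_const hslit
    have : HasDerivAt (fun w => (∏ j ∈ Finset.range n, ((a:ℂ) - j)) * (-1) ^ n * (1 - w) ^ ((a:ℂ) - n))
        ((∏ j ∈ Finset.range n, ((a:ℂ) - j)) * (-1) ^ n * (((a:ℂ) - n) * (1 - z) ^ ((a:ℂ) - n - 1) * (-1))) z :=
      hd.const_mul _
    rw [this.deriv]
    rw [Finset.prod_range_succ, show ((a:ℂ) - ((n:ℕ)+1 : ℕ)) = (a:ℂ) - n - 1 from by push_cast; ring]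
    ring

lemma hasSum_one_sub_rpow (a : ℝ) {x : ℝ} (hx0 : 0 ≤ x) (hx1 : x < 1) :
    HasSum (fun n : ℕ => (∏ j ∈ Finset.range n, ((j:ℝ) - a)) * x ^ n / n.factorial)
      ((1 - x) ^ a) := by
  have hdiff : DifferentiableOn ℂ (fun w : ℂ => (1 - w) ^ (a : ℂ)) (Metric.ball 0 1) := by
    intro z hz
    have hslit : (1 - z) ∈ Complex.slitPlane := by
      left
      have h1 : ‖z‖ < 1 := by simpa using hz
      have h2 := Complex.abs_re_le_norm z
      simp only [Complex.sub_re, Complex.one_re]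
      cases' abs_lt.mp (lt_of_le_of_lt h2 h1) with h3 h4
      linarith
    have hbase : HasDerivAt (fun w : ℂ => 1 - w) (-1 : ℂ) z := by
      simpa using (hasDerivAt_id z).const_sub (1:ℂ)
    exact (hbase.cpow_const hslit).differentiableAt.differentiableWithinAt
  have hz : (x : ℂ) ∈ Metric.ball (0:ℂ) 1 := by
    simp only [Metric.mem_ball, dist_zero_right, Complex.norm_real]
    rwa [Real.norm_eq_abs, abs_of_nonneg hx0]
  have H := Complex.hasSum_taylorSeries_on_ball hdiff hz
  have Hterm : ∀ n : ℕ,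
      ((n.factorial : ℂ))⁻¹ • ((x:ℂ) - 0) ^ n • iteratedDeriv n (fun w : ℂ => (1 - w) ^ (a : ℂ)) 0
      = (((∏ j ∈ Finset.range n, ((j:ℝ) - a)) * x ^ n / n.factorial : ℝ) : ℂ) := by
    intro n
    rw [iteratedDeriv_one_sub_cpow a n 0 (by simp)]
    have hprod : (∏ j ∈ Finset.range n, ((a:ℂ) - j)) * (-1:ℂ)^n
        = ∏ j ∈ Finset.range n, ((j:ℂ) - a) := by
      have h1 : ∏ j ∈ Finset.range n, ((j:ℂ) - a)
          = ∏ j ∈ Finset.range n, (((a:ℂ) - j) * (-1)) :=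
        Finset.prod_congr rfl fun j _ => by ring
      rw [h1, Finset.prod_mul_distrib, Finset.prod_const, Finset.card_range]
    have hcast : (∏ j ∈ Finset.range n, ((j:ℂ) - a))
        = (((∏ j ∈ Finset.range n, ((j:ℝ) - a)) : ℝ) : ℂ) := by
      push_cast
      rfl
    rw [sub_zero, smul_eq_mul, smul_eq_mul, sub_zero, Complex.one_cpow]
    calc ((n.factorial : ℂ))⁻¹ * ((x:ℂ) ^ n * ((∏ j ∈ Finset.range n, ((a:ℂ) - j)) * (-1:ℂ)^n * 1))
        = ((n.factorial : ℂ))⁻¹ * ((x:ℂ) ^ n * ((∏ j ∈ Finset.range n, ((a:ℂ) - j)) * (-1)^n)) := by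
          ring
      _ = ((n.factorial : ℂ))⁻¹ * ((x:ℂ) ^ n * (((∏ j ∈ Finset.range n, ((j:ℝ) - a)) : ℝ) : ℂ)) := by
          rw [hprod, hcast]
      _ = (((∏ j ∈ Finset.range n, ((j:ℝ) - a)) * x ^ n / n.factorial : ℝ) : ℂ) := by
          push_cast
          ring
  have H2 : HasSum (fun n : ℕ =>
      ((((∏ j ∈ Finset.range n, ((j:ℝ) - a)) * x ^ n / n.factorial : ℝ)) : ℂ))
      ((1 - (x:ℂ)) ^ (a:ℂ)) := H.congr_fun (fun n => (Hterm n).symm)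
  have hco : ((1:ℂ) - (x:ℂ)) ^ (a:ℂ) = (((1 - x : ℝ) ^ a : ℝ) : ℂ) := by
    rw [Complex.ofReal_cpow (by linarith)]
    push_cast
    rfl
  rw [hco] at H2
  exact Complex.hasSum_ofReal.mp H2

lemma prod_eq_bcoef (a : ℝ) : ∀ n : ℕ,
    (∏ j ∈ Finset.range n, ((j:ℝ) - a)) = (if n = 0 then 1 else 0) - a * bcoef a n := by
  intro n
  induction n with
  | zero => simp [bcoef]
  | succ m ih =>
    rw [Finset.prod_range_succ, ih, bcoef_succ]
    rcases Nat.eq_zero_or_pos m with h | h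
    · subst h; simp [bcoef]
    · have hm : m ≠ 0 := h.ne'
      simp [hm]
      ring

lemma hasSum_bcoef {a : ℝ} (ha0 : a ≠ 0) {x : ℝ} (hx0 : 0 ≤ x) (hx1 : x < 1) :
    HasSum (fun n : ℕ => bcoef a n * x ^ n / n.factorial) ((1 - (1 - x) ^ a) / a) := by
  have h := hasSum_one_sub_rpow a hx0 hx1
  have e : HasSum (fun n : ℕ => if n = 0 then (1:ℝ) else 0) 1 := hasSum_ite_eq 0 1
  have h2 : HasSum (fun n : ℕ => a * (bcoef a n * x ^ n / n.factorial)) (1 - (1 - x) ^ a) := by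
    have := e.sub h
    apply this.congr_fun
    intro n
    rw [prod_eq_bcoef]
    by_cases hn : n = 0
    · subst hn; simp [bcoef]
    · simp [hn]; ring
  have h3 := h2.mul_left a⁻¹
  have h4 : HasSum (fun n : ℕ => bcoef a n * x ^ n / n.factorial) (a⁻¹ * (1 - (1 - x) ^ a)) :=
    h3.congr_fun (fun n => by rw [← mul_assoc, inv_mul_cancel₀ ha0, one_mul])
  rw [← inv_mul_eq_div]
  exact h4

lemma hasSum_Bc {a : ℝ} (ha : a < 1) (ha0 : a ≠ 0) {x : ℝ} (hx0 : 0 ≤ x) (hx1 : x < 1) :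
    ∀ l : ℕ, HasSum (fun n : ℕ => Bc a n l * x ^ n / n.factorial)
      (((1 - (1 - x) ^ a) / a) ^ l / l.factorial) := by
  intro l
  induction l with
  | zero =>
    have : HasSum (fun n : ℕ => if n = 0 then (1:ℝ) else 0) 1 := hasSum_ite_eq 0 1
    simp only [pow_zero, Nat.factorial_zero, Nat.cast_one, div_one]
    apply this.congr_fun
    intro n
    rw [Bc_zero_def]
    by_cases hn : n = 0 <;> simp [hn]
  | succ l ih =>
    set φ := (1 - (1 - x) ^ a) / a with hφ
    have hb := hasSum_bcoef ha0 hx0 hx1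
    have hf : Summable fun n : ℕ => ‖Bc a n l * x ^ n / n.factorial‖ := by
      apply ih.summable.congr
      intro n
      rw [Real.norm_eq_abs, abs_of_nonneg]
      exact div_nonneg (mul_nonneg (Bc_nonneg ha n l) (pow_nonneg hx0 n)) (Nat.cast_nonneg _)
    have hg : Summable fun n : ℕ => ‖bcoef a n * x ^ n / n.factorial‖ := by
      apply hb.summable.congr
      intro n
      rw [Real.norm_eq_abs, abs_of_nonneg]
      exact div_nonneg (mul_nonneg (bcoef_nonneg ha n) (pow_nonneg hx0 n)) (Nat.cast_nonneg _)
    have hcp := hasSum_sum_range_mul_of_summable_norm hf hg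
    rw [ih.tsum_eq, hb.tsum_eq, ← hφ] at hcp
    have hterm : ∀ n : ℕ,
        (∑ k ∈ Finset.range (n+1), (Bc a k l * x ^ k / k.factorial)
            * (bcoef a (n-k) * x ^ (n-k) / (n-k).factorial))
        = ((l:ℝ)+1) * (Bc a n (l+1) * x ^ n / n.factorial) := by
      intro n
      have hs : ∀ k ∈ Finset.range (n+1),
          (Bc a k l * x ^ k / k.factorial) * (bcoef a (n-k) * x ^ (n-k) / (n-k).factorial)
          = ((n.choose k : ℝ) * Bc a k l * bcoef a (n-k)) * (x ^ n / n.factorial) := by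
        intro k hk
        have hkn : k ≤ n := by simpa [Nat.lt_succ_iff] using hk
        have hx : x ^ k * x ^ (n-k) = x ^ n := by
          rw [← pow_add, Nat.add_sub_cancel' hkn]
        have hfact : (n.choose k : ℝ) * k.factorial * (n-k).factorial = n.factorial := by
          exact_mod_cast congrArg (Nat.cast : ℕ → ℝ)
            (Nat.choose_mul_factorial_mul_factorial hkn)
        have hk0 : (k.factorial : ℝ) ≠ 0 := Nat.cast_ne_zero.mpr k.factorial_ne_zero
        have hnk0 : ((n-k).factorial : ℝ) ≠ 0 := Nat.cast_ne_zero.mpr (n-k).factorial_ne_zero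
        have hn0 : (n.factorial : ℝ) ≠ 0 := Nat.cast_ne_zero.mpr n.factorial_ne_zero
        field_simp
        rw [← hx, ← hfact]
        ring
      rw [Finset.sum_congr rfl hs, ← Finset.sum_mul]
      have := Bc_succ_def a n l
      have hl1 : ((l:ℝ)+1) ≠ 0 := by positivity
      rw [eq_div_iff (by exact_mod_cast hl1)] at this
      push_cast at this
      rw [← this]
      ring
    have hcp2 : HasSum (fun n => ((l:ℝ)+1) * (Bc a n (l+1) * x ^ n / n.factorial))
        (φ ^ l / l.factorial * φ) := by
      apply hcp.congr_fun
      intro n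
      exact (hterm n).symm
    have hl1 : ((l:ℝ)+1) ≠ 0 := by positivity
    have hcp3 := hcp2.mul_left ((l:ℝ)+1)⁻¹
    have hcp4 : HasSum (fun n => Bc a n (l+1) * x ^ n / n.factorial)
        (((l:ℝ)+1)⁻¹ * (φ ^ l / l.factorial * φ)) :=
      hcp3.congr_fun (fun n => by rw [← mul_assoc, inv_mul_cancel₀ hl1, one_mul])
    have : ((l:ℝ)+1)⁻¹ * (φ ^ l / l.factorial * φ) = φ ^ (l+1) / (l+1).factorial := by
      rw [Nat.factorial_succ]
      push_cast
      rw [pow_succ]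
      field_simp
      try ring
    rwa [this] at hcp4

/-- **Probability generating function of `gNB(γ₀, a, p)`** (Appendix F): for `t ∈ [0,1]`,
`∑_{n≥0} p_N(n) t^n = exp{−γ₀((1 − pt)^a − (1 − p)^a)/(a p^a)}`. -/
theorem gNB_pgf (a γ₀ p : ℝ) (ha : a < 1) (ha0 : a ≠ 0)
    (hγ : 0 < γ₀) (hp : p ∈ Set.Ioo (0 : ℝ) 1)
    (pN : ℕ → ℝ)
    (hpN : ∀ n : ℕ, pN n =
      p ^ n / (Nat.factorial n : ℝ) *
        Real.exp (-(γ₀ * (1 - (1 - p) ^ a) / (a * p ^ a))) *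
        ∑ l ∈ Finset.range (n + 1), γ₀ ^ l * p ^ (-(a * l)) * Sgen a n l) :
    ∀ t : ℝ, t ∈ Set.Icc (0 : ℝ) 1 →
      ∑' n : ℕ, pN n * t ^ n =
        Real.exp (-(γ₀ * ((1 - p * t) ^ a - (1 - p) ^ a) / (a * p ^ a))) := by
  
  intro t ht
  obtain ⟨hp0, hp1⟩ := hp
  obtain ⟨ht0, ht1⟩ := ht
  set x := p * t with hxdef
  have hx0 : 0 ≤ x := mul_nonneg hp0.le ht0
  have hx1 : x < 1 := lt_of_le_of_lt (mul_le_of_le_one_right hp0.le ht1) hp1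
  set c := γ₀ * p ^ (-a) with hcdef
  set φ := (1 - (1 - x) ^ a) / a with hφdef
  set u : ℕ → ℕ → ℝ :=
    fun l n => γ₀ ^ l * p ^ (-(a * (l:ℝ))) * Sgen a n l * (x ^ n / n.factorial) with hudef
  have hcl : ∀ l : ℕ, γ₀ ^ l * p ^ (-(a * (l:ℝ))) = c ^ l := by
    intro l
    rw [hcdef, mul_pow, show -(a * (l:ℝ)) = (-a) * (l:ℝ) from by ring,
      Real.rpow_mul hp0.le, Real.rpow_natCast]
  have hl : ∀ l : ℕ, HasSum (fun n => u l n) (c ^ l * (φ ^ l / l.factorial)) := by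
    intro l
    apply ((hasSum_Bc ha ha0 hx0 hx1 l).mul_left (c ^ l)).congr_fun
    intro n
    rw [hudef]
    simp only
    rw [Sgen_eq_Bc, hcl]
    ring
  have hexp : HasSum (fun l : ℕ => c ^ l * (φ ^ l / l.factorial)) (Real.exp (c * φ)) := by
    have h := NormedSpace.expSeries_div_hasSum_exp (c * φ)
    rw [← Real.exp_eq_exp_ℝ] at h
    apply h.congr_fun
    intro l
    rw [mul_pow c φ]
    exact (mul_div_assoc _ _ _).symm
  have hu0 : ∀ q : ℕ × ℕ, 0 ≤ Function.uncurry u q := by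
    rintro ⟨l, n⟩
    apply mul_nonneg (mul_nonneg (mul_nonneg (by positivity) (by positivity))
      (Sgen_nonneg ha n l))
    positivity
  have hsumm : Summable (Function.uncurry u) := by
    rw [summable_prod_of_nonneg hu0]
    constructor
    · exact fun l => (hl l).summable
    · apply hexp.summable.congr
      intro l
      exact ((hl l).tsum_eq).symm
  have hvanish : ∀ n : ℕ, ∀ l ∉ Finset.range (n+1), u l n = 0 := by
    intro n l hl'
    have : n < l := by simpa [Nat.lt_succ_iff] using hl'
    rw [hudef]
    simp only
    rw [Sgen_eq_zero_of_lt a n l this]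
    ring
  have hswap : ∑' n : ℕ, ∑' l : ℕ, u l n = ∑' l : ℕ, ∑' n : ℕ, u l n :=
    hsumm.tsum_comm' (fun l => (hl l).summable)
      (fun n => summable_of_ne_finset_zero (hvanish n))
  have hrow : ∀ n : ℕ, ∑' l : ℕ, u l n = ∑ l ∈ Finset.range (n+1), u l n :=
    fun n => tsum_eq_sum (hvanish n)
  have hRHS : ∑' l : ℕ, ∑' n : ℕ, u l n = Real.exp (c * φ) := by
    rw [tsum_congr (fun l => (hl l).tsum_eq)]
    exact hexp.tsum_eq
  have hpNt : ∀ n : ℕ, pN n * t ^ n =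
      Real.exp (-(γ₀ * (1 - (1 - p) ^ a) / (a * p ^ a))) * ∑ l ∈ Finset.range (n+1), u l n := by
    intro n
    rw [hpN n, Finset.mul_sum, Finset.mul_sum, Finset.sum_mul]
    apply Finset.sum_congr rfl
    intro l _
    rw [hudef]
    simp only
    rw [hxdef, mul_pow]
    ring
  calc ∑' n : ℕ, pN n * t ^ n
      = ∑' n : ℕ, Real.exp (-(γ₀ * (1 - (1 - p) ^ a) / (a * p ^ a)))
          * ∑ l ∈ Finset.range (n+1), u l n := tsum_congr hpNt
    _ = Real.exp (-(γ₀ * (1 - (1 - p) ^ a) / (a * p ^ a)))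
          * ∑' n : ℕ, ∑ l ∈ Finset.range (n+1), u l n := tsum_mul_left
    _ = Real.exp (-(γ₀ * (1 - (1 - p) ^ a) / (a * p ^ a))) * Real.exp (c * φ) := by
        rw [← tsum_congr hrow, hswap, hRHS]
    _ = Real.exp (-(γ₀ * (1 - (1 - p) ^ a) / (a * p ^ a)) + c * φ) := by
        rw [← Real.exp_add]
    _ = Real.exp (-(γ₀ * ((1 - p * t) ^ a - (1 - p) ^ a) / (a * p ^ a))) := by
        congr 1
        rw [hcdef, hφdef, hxdef, Real.rpow_neg hp0.le]
        have hpa : (p:ℝ) ^ a ≠ 0 := (Real.rpow_pos_of_pos hp0 a).ne'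
        field_simp
        ring
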